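/- For real p with 1 ≤ p ≤ n, the set 𝒫(p) = {A ∈ Sym²(ℝⁿ) : λ_1(A) + … + λ_{⌊p⌋}(A) + (p − ⌊p⌋)λ_{⌊p⌋+1}(A) ≥ 0} is a closed convex cone containing the positive semidefinite matrices. -/

import Mathlib

open Pointwise

/-- The increasingly ordered eigenvalues `λ_1(A) ≤ … ≤ λ_n(A)` of a symmetric matrix
(indexed by `Fin n`, so index `i` corresponds to `λ_{i+1}`). -/
noncomputable def sortedEig {n : ℕ} (A : Matrix (Fin n) (Fin n) ℝ) (hA : A.IsHermitian) :
    Fin n → ℝ :=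
  hA.eigenvalues ∘ Tuple.sort hA.eigenvalues

/-- The partial eigenvalue sum `λ_1(A) + ⋯ + λ_{⌊p⌋}(A) + (p − ⌊p⌋) λ_{⌊p⌋+1}(A)`. -/
noncomputable def pSum {n : ℕ} (p : ℝ) (A : Matrix (Fin n) (Fin n) ℝ)
    (hA : A.IsHermitian) : ℝ :=
  ∑ i : Fin n,
    (if (i : ℕ) + 1 ≤ ⌊p⌋₊ then (1 : ℝ) else if (i : ℕ) = ⌊p⌋₊ then p - ⌊p⌋₊ else 0) *
      sortedEig A hA i

/-- The generalized `p`-convexity cone `𝒫(p) ⊂ Sym²(ℝⁿ)`. -/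
noncomputable def pCone (n : ℕ) (p : ℝ) : Set (Matrix (Fin n) (Fin n) ℝ) :=
  {A | ∃ hA : A.IsHermitian, 0 ≤ pSum p A hA}

namespace PconeAux

open Matrix Finset

variable {n : ℕ} {A B : Matrix (Fin n) (Fin n) ℝ}

/-- orthonormal family of vectors -/
def ON {n m : ℕ} (v : Fin m → (Fin n → ℝ)) : Prop :=
  ∀ i j, v i ⬝ᵥ v j = (if i = j then (1 : ℝ) else 0)

/-- quadratic form sum -/
noncomputable def Q {n m : ℕ} (v : Fin m → (Fin n → ℝ)) (A : Matrix (Fin n) (Fin n) ℝ) : ℝ :=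
  ∑ i, v i ⬝ᵥ (A *ᵥ v i)

/-- the sum of the `m` smallest eigenvalues -/
noncomputable def S (m : ℕ) (A : Matrix (Fin n) (Fin n) ℝ) (hA : A.IsHermitian) : ℝ :=
  ∑ i : Fin n, (if (i : ℕ) < m then (1 : ℝ) else 0) * sortedEig A hA i

lemma filter_lt_eq_map {m : ℕ} (hm : m ≤ n) :
    Finset.univ.filter (fun i : Fin n => (i : ℕ) < m) =
      Finset.univ.map (Fin.castLEEmb hm) := by
  ext a
  simp only [mem_filter, mem_univ, true_and, Finset.mem_map, Fin.castLEEmb_apply]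
  constructor
  · intro h; exact ⟨⟨(a : ℕ), h⟩, by ext; rfl⟩
  · rintro ⟨b, rfl⟩; simp [b.isLt]

lemma sum_indicator_eq {m : ℕ} (hm : m ≤ n) (f : Fin n → ℝ) :
    ∑ i : Fin n, (if (i : ℕ) < m then (1 : ℝ) else 0) * f i
      = ∑ i : Fin m, f (Fin.castLE hm i) := by
  simp only [ite_mul, one_mul, zero_mul]
  rw [← Finset.sum_filter, filter_lt_eq_map hm, Finset.sum_map]
  simp

lemma weight_bound {m : ℕ} (hm : m ≤ n) (g e : Fin n → ℝ) (hg : Monotone g)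
    (he0 : ∀ i, 0 ≤ e i) (he1 : ∀ i, e i ≤ 1) (hesum : ∑ i, e i = m) :
    ∑ i : Fin n, (if (i : ℕ) < m then (1 : ℝ) else 0) * g i ≤ ∑ i, g i * e i := by
  rcases Nat.eq_zero_or_pos m with rfl | hmpos
  · have : ∀ i ∈ Finset.univ, e i = 0 :=
      (Finset.sum_eq_zero_iff_of_nonneg (fun i _ => he0 i)).mp (by simpa using hesum)
    simp only [Nat.not_lt_zero, if_false, zero_mul, Finset.sum_const_zero]
    refine Finset.sum_nonneg fun i _ => ?_
    rw [this i (mem_univ i)]; ring_nf; exact le_refl 0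
  · set t : ℝ := g ⟨m - 1, by omega⟩ with ht
    have hind : ∑ i : Fin n, (if (i : ℕ) < m then (1 : ℝ) else 0) = m := by
      have := sum_indicator_eq hm (fun _ : Fin n => (1 : ℝ))
      simpa using this
    have key : ∀ i : Fin n,
        (if (i : ℕ) < m then (1 : ℝ) else 0) * g i + t * (e i - (if (i : ℕ) < m then (1 : ℝ) else 0))
          ≤ g i * e i := by
      intro i
      by_cases h : (i : ℕ) < m
      · have hgi : g i ≤ t := hg (by simp [Fin.le_def]; omega)
        simp only [if_pos h]
        nlinarith [he1 i]
      · have hgi : t ≤ g i := hg (by simp [Fin.le_def]; omega)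
        simp only [if_neg h]
        nlinarith [he0 i]
    have hsum := Finset.sum_le_sum (fun i (_ : i ∈ Finset.univ) => key i)
    rw [Finset.sum_add_distrib, ← Finset.mul_sum, Finset.sum_sub_distrib, hesum, hind] at hsum
    simpa using hsum

lemma star_mul_self' (hA : A.IsHermitian) :
    star (hA.eigenvectorUnitary : Matrix (Fin n) (Fin n) ℝ) * (hA.eigenvectorUnitary : Matrix (Fin n) (Fin n) ℝ) = 1 :=
  Unitary.coe_star_mul_self _

lemma mul_star_self' (hA : A.IsHermitian) :
    (hA.eigenvectorUnitary : Matrix (Fin n) (Fin n) ℝ) * star (hA.eigenvectorUnitary : Matrix (Fin n) (Fin n) ℝ) = 1 :=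
  Unitary.coe_mul_star_self _

lemma diag_eq (hA : A.IsHermitian) :
    star (hA.eigenvectorUnitary : Matrix (Fin n) (Fin n) ℝ) * A * (hA.eigenvectorUnitary : Matrix (Fin n) (Fin n) ℝ)
      = diagonal hA.eigenvalues := by
  have := hA.conjStarAlgAut_star_eigenvectorUnitary
  simpa [RCLike.ofReal_real_eq_id] using this

/-- `x ↦ Uᴴ x` preserves dot products. -/
lemma dot_transfer (hA : A.IsHermitian) (x y : Fin n → ℝ) :
    (star (hA.eigenvectorUnitary : Matrix (Fin n) (Fin n) ℝ) *ᵥ x) ⬝ᵥ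
      (star (hA.eigenvectorUnitary : Matrix (Fin n) (Fin n) ℝ) *ᵥ y) = x ⬝ᵥ y := by
  set U : Matrix (Fin n) (Fin n) ℝ := (hA.eigenvectorUnitary : Matrix (Fin n) (Fin n) ℝ)
  rw [dotProduct_mulVec, vecMul_mulVec]
  have hT : (star U)ᵀ = Uᵀᵀ := by
    rw [Matrix.star_eq_conjTranspose, conjTranspose_eq_transpose_of_trivial]
  rw [hT, transpose_transpose]
  rw [show U * star U = 1 from mul_star_self' hA, vecMul_one]

lemma dot_transfer' (hA : A.IsHermitian) (x y : Fin n → ℝ) :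
    ((hA.eigenvectorUnitary : Matrix (Fin n) (Fin n) ℝ) *ᵥ x) ⬝ᵥ
      ((hA.eigenvectorUnitary : Matrix (Fin n) (Fin n) ℝ) *ᵥ y) = x ⬝ᵥ y := by
  set U : Matrix (Fin n) (Fin n) ℝ := (hA.eigenvectorUnitary : Matrix (Fin n) (Fin n) ℝ)
  rw [dotProduct_mulVec, vecMul_mulVec]
  have hT : Uᵀ = star U := by
    rw [Matrix.star_eq_conjTranspose, conjTranspose_eq_transpose_of_trivial]
  rw [hT, show star U * U = 1 from star_mul_self' hA, vecMul_one]

lemma quad_eq (hA : A.IsHermitian) (x : Fin n → ℝ) :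
    x ⬝ᵥ (A *ᵥ x) = ∑ j, hA.eigenvalues j *
      ((star (hA.eigenvectorUnitary : Matrix (Fin n) (Fin n) ℝ) *ᵥ x) j)^2 := by
  set U : Matrix (Fin n) (Fin n) ℝ := (hA.eigenvectorUnitary : Matrix (Fin n) (Fin n) ℝ)
  obtain ⟨y, hy⟩ : ∃ y, y = star U *ᵥ x := ⟨_, rfl⟩
  have hx : U *ᵥ y = x := by
    rw [hy, mulVec_mulVec, show U * star U = 1 from mul_star_self' hA, one_mulVec]
  rw [← hy]
  have hT : Uᵀ = star U := by
    rw [Matrix.star_eq_conjTranspose, conjTranspose_eq_transpose_of_trivial]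
  calc x ⬝ᵥ (A *ᵥ x) = (U *ᵥ y) ⬝ᵥ (A *ᵥ (U *ᵥ y)) := by rw [hx]
    _ = ((U *ᵥ y) ᵥ* (A * U)) ⬝ᵥ y := by rw [mulVec_mulVec, dotProduct_mulVec]
    _ = (y ᵥ* (Uᵀ * (A * U))) ⬝ᵥ y := by rw [vecMul_mulVec]
    _ = (y ᵥ* diagonal hA.eigenvalues) ⬝ᵥ y := by
        rw [hT, ← mul_assoc, diag_eq hA]
    _ = ∑ j, hA.eigenvalues j * (y j)^2 := by
        unfold dotProduct
        refine Finset.sum_congr rfl fun j _ => ?_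
        rw [vecMul_diagonal]
        ring

/-- Ky Fan: any orthonormal family bounds the sum of smallest eigenvalues from above. -/
lemma S_le_Q {m : ℕ} (hm : m ≤ n) (hA : A.IsHermitian) (v : Fin m → (Fin n → ℝ))
    (hv : ON v) : S m A hA ≤ Q v A := by
  set U : Matrix (Fin n) (Fin n) ℝ := (hA.eigenvectorUnitary : Matrix (Fin n) (Fin n) ℝ) with hU
  set y : Fin m → Fin n → ℝ := fun i => star U *ᵥ v i with hy
  set d : Fin n → ℝ := fun j => ∑ i, (y i j)^2 with hd
  have hyON : ON y := by
    intro i j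
    rw [hy]; exact (dot_transfer hA (v i) (v j)).trans (hv i j)
  have hQ : Q v A = ∑ j, hA.eigenvalues j * d j := by
    unfold Q
    rw [Finset.sum_congr rfl fun i _ => quad_eq hA (v i), Finset.sum_comm]
    exact Finset.sum_congr rfl fun j _ => by rw [hd, Finset.mul_sum]
  have hd0 : ∀ j, 0 ≤ d j := fun j => Finset.sum_nonneg fun i _ => sq_nonneg _
  set Y : Matrix (Fin m) (Fin n) ℝ := Matrix.of y with hY
  have hYY : Y * Yᵀ = 1 := by
    ext i i'
    rw [Matrix.mul_apply, Matrix.one_apply]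
    simpa [dotProduct, hY] using hyON i i'
  set G : Matrix (Fin n) (Fin n) ℝ := Yᵀ * Y with hG
  have hGsymm : ∀ a b, G a b = G b a := by
    intro a b
    rw [hG, Matrix.mul_apply, Matrix.mul_apply]
    exact Finset.sum_congr rfl fun i _ => by simp [Matrix.transpose_apply]; ring
  have hGG : G * G = G := by
    rw [hG, Matrix.mul_assoc, ← Matrix.mul_assoc Y Yᵀ Y, hYY, Matrix.one_mul]
  have hdG : ∀ j, d j = G j j := by
    intro j
    rw [hd, hG, Matrix.mul_apply]
    exact Finset.sum_congr rfl fun i _ => by rw [hY]; simp [Matrix.transpose_apply, Matrix.of_apply, pow_two]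
  have hd1 : ∀ j, d j ≤ 1 := by
    intro j
    have h1 : G j j = ∑ a, (G j a)^2 := by
      conv_lhs => rw [← hGG]
      rw [Matrix.mul_apply]
      exact Finset.sum_congr rfl fun a _ => by rw [hGsymm a j, pow_two]
    have h2 : (G j j)^2 ≤ G j j := by
      calc (G j j)^2 ≤ ∑ a, (G j a)^2 :=
            Finset.single_le_sum (f := fun a => (G j a)^2) (fun a _ => sq_nonneg _) (mem_univ j)
        _ = G j j := h1.symm
    have h3 : 0 ≤ d j := hd0 j
    rw [hdG] at h3 ⊢
    nlinarith
  have hdsum : ∑ j, d j = m := by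
    have : ∑ j, d j = Matrix.trace G := by
      rw [Matrix.trace]
      exact Finset.sum_congr rfl fun j _ => hdG j
    rw [this, hG, Matrix.trace_mul_comm, hYY, Matrix.trace_one]
    simp
  set σ := Tuple.sort hA.eigenvalues with hσ
  have hmono : Monotone (sortedEig A hA) := Tuple.monotone_sort hA.eigenvalues
  have hwb := weight_bound hm (sortedEig A hA) (fun i => d (σ i)) hmono
    (fun i => hd0 _) (fun i => hd1 _) (by rw [← hdsum]; exact Equiv.sum_comp σ d)
  have hre : ∑ i, sortedEig A hA i * d (σ i) = ∑ j, hA.eigenvalues j * d j :=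
    Equiv.sum_comp σ (fun j => hA.eigenvalues j * d j)
  rw [hQ, ← hre]
  exact hwb

/-- The sum of the `m` smallest eigenvalues is attained by the orthonormal family of
eigenvectors. -/
lemma exists_ON_eq (m : ℕ) (hm : m ≤ n) (hA : A.IsHermitian) :
    ∃ v : Fin m → (Fin n → ℝ), ON v ∧ Q v A = S m A hA := by
  set U : Matrix (Fin n) (Fin n) ℝ := (hA.eigenvectorUnitary : Matrix (Fin n) (Fin n) ℝ) with hU
  set σ := Tuple.sort hA.eigenvalues with hσ
  refine ⟨fun i => U *ᵥ Pi.single (σ (Fin.castLE hm i)) 1, ?_, ?_⟩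
  · intro i j
    rw [dot_transfer' hA, single_dotProduct, one_mul, Pi.single_apply]
    by_cases h : i = j
    · simp [h]
    · have : σ (Fin.castLE hm j) ≠ σ (Fin.castLE hm i) := by
        intro hc
        exact h (Fin.castLE_injective hm (σ.injective hc)).symm
      simp [h, this]
  · unfold Q
    have hterm : ∀ i : Fin m,
        (U *ᵥ Pi.single (σ (Fin.castLE hm i)) 1) ⬝ᵥ (A *ᵥ (U *ᵥ Pi.single (σ (Fin.castLE hm i)) 1))
          = sortedEig A hA (Fin.castLE hm i) := by
      intro i
      rw [quad_eq hA]
      have hsingle : star U *ᵥ (U *ᵥ Pi.single (σ (Fin.castLE hm i)) 1)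
          = Pi.single (σ (Fin.castLE hm i)) 1 := by
        rw [mulVec_mulVec, star_mul_self' hA, one_mulVec]
      rw [hsingle]
      have hpt : ∀ j, hA.eigenvalues j * (Pi.single (M := fun _ => ℝ) (σ (Fin.castLE hm i)) 1 j)^2
          = if j = σ (Fin.castLE hm i) then hA.eigenvalues j else 0 := by
        intro j
        rw [Pi.single_apply]
        by_cases h : j = σ (Fin.castLE hm i) <;> simp [h]
      rw [Finset.sum_congr rfl fun j _ => hpt j, Finset.sum_ite_eq' Finset.univ _ hA.eigenvalues]
      simp [sortedEig, hσ]
    rw [Finset.sum_congr rfl fun i _ => hterm i, S, sum_indicator_eq hm]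

end PconeAux
namespace PconeAux

open Matrix Finset

variable {n : ℕ} {A B : Matrix (Fin n) (Fin n) ℝ}

lemma Q_add {m : ℕ} (v : Fin m → (Fin n → ℝ)) :
    Q v (A + B) = Q v A + Q v B := by
  unfold Q
  rw [← Finset.sum_add_distrib]
  exact Finset.sum_congr rfl fun i _ => by rw [add_mulVec, dotProduct_add]

lemma Q_smul {m : ℕ} (v : Fin m → (Fin n → ℝ)) (c : ℝ) :
    Q v (c • A) = c * Q v A := by
  unfold Q
  rw [Finset.mul_sum]
  refine Finset.sum_congr rfl fun i _ => ?_
  rw [smul_mulVec, dotProduct_smul, smul_eq_mul]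

lemma S_superadd {m : ℕ} (hm : m ≤ n) (hA : A.IsHermitian) (hB : B.IsHermitian)
    (hAB : (A + B).IsHermitian) :
    S m A hA + S m B hB ≤ S m (A + B) hAB := by
  obtain ⟨v, hv, hQv⟩ := exists_ON_eq m hm hAB
  rw [← hQv, Q_add]
  exact add_le_add (S_le_Q hm hA v hv) (S_le_Q hm hB v hv)

lemma S_smul {m : ℕ} (hm : m ≤ n) (hA : A.IsHermitian) {c : ℝ} (hc : 0 ≤ c)
    (hcA : (c • A).IsHermitian) :
    S m (c • A) hcA = c * S m A hA := by
  refine le_antisymm ?_ ?_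
  · obtain ⟨v, hv, hQv⟩ := exists_ON_eq m hm hA
    rw [← hQv, ← Q_smul]
    exact S_le_Q hm hcA v hv
  · obtain ⟨v, hv, hQv⟩ := exists_ON_eq m hm hcA
    rw [← hQv, Q_smul]
    exact mul_le_mul_of_nonneg_left (S_le_Q hm hA v hv) hc

lemma pSum_eq (p : ℝ) (hA : A.IsHermitian) :
    pSum p A hA = (1 - (p - ⌊p⌋₊)) * S ⌊p⌋₊ A hA + (p - ⌊p⌋₊) * S (⌊p⌋₊ + 1) A hA := by
  unfold pSum S
  rw [Finset.mul_sum, Finset.mul_sum, ← Finset.sum_add_distrib]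
  refine Finset.sum_congr rfl fun i _ => ?_
  rcases lt_trichotomy ((i : ℕ)) ⌊p⌋₊ with h | h | h
  · rw [if_pos (by omega), if_pos h, if_pos (by omega)]
    ring
  · rw [if_neg (by omega), if_pos h, if_neg (by omega), if_pos (by omega)]
    ring
  · rw [if_neg (by omega), if_neg (by omega), if_neg (by omega), if_neg (by omega)]
    ring

lemma S_min (hA : A.IsHermitian) {m : ℕ} (hmn : n ≤ m) :
    S m A hA = S n A hA := by
  unfold S
  refine Finset.sum_congr rfl fun i _ => ?_
  rw [if_pos (by omega), if_pos i.isLt]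

end PconeAux
open Matrix Finset PconeAux in
/-- For real `1 ≤ p ≤ n`, the set
`𝒫(p) = {A : λ_1(A) + ⋯ + λ_{⌊p⌋}(A) + (p − ⌊p⌋) λ_{⌊p⌋+1}(A) ≥ 0}` is a closed convex
cone containing the positive semidefinite matrices. -/
theorem pCone_closed_convex_cone (n : ℕ) (p : ℝ) (hp : 1 ≤ p) (hpn : p ≤ n) :
    IsClosed (pCone n p) ∧ Convex ℝ (pCone n p) ∧
    (∀ c : ℝ, 0 ≤ c → ∀ A ∈ pCone n p, c • A ∈ pCone n p) ∧
    (∀ A : Matrix (Fin n) (Fin n) ℝ, A.PosSemidef → A ∈ pCone n p) := by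
  set k : ℕ := ⌊p⌋₊ with hk
  set θ : ℝ := p - k with hθ
  set m2 : ℕ := min (k + 1) n with hm2def
  have hp0 : (0 : ℝ) ≤ p := le_trans zero_le_one hp
  have hkn : k ≤ n := by
    rw [hk]
    have := Nat.floor_le_floor hpn
    simpa using this
  have hm2 : m2 ≤ n := min_le_right _ _
  have hθ0 : 0 ≤ θ := by rw [hθ]; have := Nat.floor_le hp0; linarith
  have hθ1 : θ ≤ 1 := by
    rw [hθ]
    have := Nat.lt_floor_add_one p
    push_cast at this ⊢
    linarith
  have hSk1 : ∀ (A : Matrix (Fin n) (Fin n) ℝ) (hA : A.IsHermitian),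
      S (k + 1) A hA = S m2 A hA := by
    intro A hA
    rcases le_or_gt (k + 1) n with h | h
    · rw [hm2def, min_eq_left h]
    · rw [hm2def, min_eq_right (by omega), S_min hA (by omega)]
  have hpSum : ∀ (A : Matrix (Fin n) (Fin n) ℝ) (hA : A.IsHermitian),
      pSum p A hA = (1 - θ) * S k A hA + θ * S m2 A hA := by
    intro A hA
    rw [pSum_eq p hA, hSk1 A hA]
  have hsm : ∀ (c : ℝ) (X : Matrix (Fin n) (Fin n) ℝ), X.IsHermitian → (c • X).IsHermitian := by
    intro c X hX
    have : (c • X)ᴴ = c • Xᴴ := by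
      rw [Matrix.conjTranspose_smul, star_trivial]
    rw [Matrix.IsHermitian, this, hX]
  -- superadditivity of pSum
  have hsuper : ∀ (A B : Matrix (Fin n) (Fin n) ℝ) (hA : A.IsHermitian) (hB : B.IsHermitian)
      (hAB : (A + B).IsHermitian),
      pSum p A hA + pSum p B hB ≤ pSum p (A + B) hAB := by
    intro A B hA hB hAB
    rw [hpSum A hA, hpSum B hB, hpSum _ hAB]
    have h1 := S_superadd hkn hA hB hAB
    have h2 := S_superadd hm2 hA hB hAB
    nlinarith
  -- homogeneity of pSum
  have hscale : ∀ (A : Matrix (Fin n) (Fin n) ℝ) (hA : A.IsHermitian) (c : ℝ), 0 ≤ c →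
      ∀ (hcA : (c • A).IsHermitian), pSum p (c • A) hcA = c * pSum p A hA := by
    intro A hA c hc hcA
    rw [hpSum _ hcA, hpSum A hA, S_smul hkn hA hc hcA, S_smul hm2 hA hc hcA]
    ring
  refine ⟨?_, ?_, ?_, ?_⟩
  · -- closedness
    have hEq : pCone n p = {A : Matrix (Fin n) (Fin n) ℝ | A.IsHermitian} ∩
        {A : Matrix (Fin n) (Fin n) ℝ | ∀ v : Fin k → (Fin n → ℝ), ON v →
          ∀ w : Fin m2 → (Fin n → ℝ), ON w → 0 ≤ (1 - θ) * Q v A + θ * Q w A} := by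
      ext A
      constructor
      · rintro ⟨hA, hps⟩
        refine ⟨hA, fun v hv w hw => ?_⟩
        rw [hpSum A hA] at hps
        have h1 := mul_le_mul_of_nonneg_left (S_le_Q hkn hA v hv) (by linarith : (0:ℝ) ≤ 1 - θ)
        have h2 := mul_le_mul_of_nonneg_left (S_le_Q hm2 hA w hw) hθ0
        linarith
      · rintro ⟨hA, hineq⟩
        refine ⟨hA, ?_⟩
        obtain ⟨v, hv, hQv⟩ := exists_ON_eq k hkn hA
        obtain ⟨w, hw, hQw⟩ := exists_ON_eq m2 hm2 hA
        rw [hpSum A hA, ← hQv, ← hQw]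
        exact hineq v hv w hw
    rw [hEq]
    refine IsClosed.inter ?_ ?_
    · exact isClosed_eq (Continuous.matrix_conjTranspose continuous_id) continuous_id
    · have hQcont : ∀ (m : ℕ) (v : Fin m → (Fin n → ℝ)),
          Continuous fun A : Matrix (Fin n) (Fin n) ℝ => Q v A := by
        intro m v
        refine continuous_finset_sum _ fun i _ => ?_
        exact Continuous.dotProduct continuous_const
          (Continuous.matrix_mulVec continuous_id continuous_const)
      have : {A : Matrix (Fin n) (Fin n) ℝ | ∀ v : Fin k → (Fin n → ℝ), ON v →
          ∀ w : Fin m2 → (Fin n → ℝ), ON w → 0 ≤ (1 - θ) * Q v A + θ * Q w A}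
          = ⋂ (v : Fin k → (Fin n → ℝ)) (_ : ON v) (w : Fin m2 → (Fin n → ℝ)) (_ : ON w),
            {A : Matrix (Fin n) (Fin n) ℝ | 0 ≤ (1 - θ) * Q v A + θ * Q w A} := by
        ext A
        simp only [Set.mem_iInter, Set.mem_setOf_eq]
      rw [this]
      refine isClosed_iInter fun v => isClosed_iInter fun hv =>
        isClosed_iInter fun w => isClosed_iInter fun hw => ?_
      exact isClosed_le continuous_const
        ((continuous_const.mul (hQcont k v)).add (continuous_const.mul (hQcont m2 w)))
  · -- convexity
    rintro A ⟨hA, hpsA⟩ B ⟨hB, hpsB⟩ a b ha hb hab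
    have haA : (a • A).IsHermitian := hsm a A hA
    have hbB : (b • B).IsHermitian := hsm b B hB
    have hS : (a • A + b • B).IsHermitian := haA.add hbB
    refine ⟨hS, ?_⟩
    have h1 := hsuper (a • A) (b • B) haA hbB hS
    have h2 := hscale A hA a ha haA
    have h3 := hscale B hB b hb hbB
    rw [h2, h3] at h1
    nlinarith
  · -- cone
    rintro c hc A ⟨hA, hpsA⟩
    have hcA : (c • A).IsHermitian := hsm c A hA
    refine ⟨hcA, ?_⟩
    rw [hscale A hA c hc hcA]
    exact mul_nonneg hc hpsA
  · -- contains PSD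
    rintro A hP
    refine ⟨hP.1, ?_⟩
    refine Finset.sum_nonneg fun i _ => mul_nonneg ?_ ?_
    · split
      · exact zero_le_one
      · split
        · exact hθ0
        · exact le_refl 0
    · exact hP.eigenvalues_nonneg _
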